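/- The left ideal N₊₁ = { [[a,c],[b,d]] ∈ M₂(ℝ⁺) : a ≤ c and b ≤ d } of the semiring M₂(ℝ⁺) is not subtractive. -/
import Mathlib


/-- The 2×2 matrix semiring over the nonnegative reals. -/
abbrev M2 : Type := Matrix (Fin 2) (Fin 2) NNReal

/-- A subset of a semiring is a left ideal. -/
def IsLeftIdeal (I : Set M2) : Prop :=
  0 ∈ I ∧ (∀ x ∈ I, ∀ y ∈ I, x + y ∈ I) ∧ ∀ s : M2, ∀ x ∈ I, s * x ∈ I

/-- A subset is subtractive: `s + x = y` with `x, y ∈ I` implies `s ∈ I`. -/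
def IsSubtractive (I : Set M2) : Prop :=
  ∀ s x y : M2, x ∈ I → y ∈ I → s + x = y → s ∈ I

/-- `N₊₁ = { [[a,c],[b,d]] : a ≤ c, b ≤ d }`. -/
def Nge1 : Set M2 := {A | A 0 0 ≤ A 0 1 ∧ A 1 0 ≤ A 1 1}

/-- `N₊₁` is a left ideal of `M₂(ℝ⁺)` which is not subtractive. -/
theorem stmt_4 : IsLeftIdeal Nge1 ∧ ¬ IsSubtractive Nge1 := by
  constructor
  · refine ⟨⟨le_refl _, le_refl _⟩, ?_, ?_⟩
    · intro x hx y hy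
      exact ⟨add_le_add hx.1 hy.1, add_le_add hx.2 hy.2⟩
    · intro s x hx
      constructor <;>
      · simp only [Matrix.mul_apply, Fin.sum_univ_two]
        exact add_le_add (mul_le_mul_right hx.1 _) (mul_le_mul_right hx.2 _)
  · intro h
    have := h !![1,0;0,0] !![0,1;0,1] !![1,1;0,1]
      ⟨by norm_num [Nge1], by norm_num [Nge1]⟩
      ⟨by norm_num [Nge1], by norm_num [Nge1]⟩
      (by ext i j; fin_cases i <;> fin_cases j <;> simp)
    have h1 : (1:NNReal) ≤ 0 := this.1
    simp at h1
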